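/- Let G be a compact Hausdorff topological group and P ≤ Aut(G) a subgroup. If P ∩ Inn(G) is essential in cl(P) ∩ Inn(G) (where cl(P) is the closure of P in Aut(G)), then the topological semidirect product G ⋊ P is a minimal topological group. -/

import Mathlib

open scoped Topology

/-- The group of self-homeomorphisms of `X`, with composition as multiplication:
`(f * g) x = f (g x)`, identity `Homeomorph.refl` and inverse `Homeomorph.symm`. -/
instance homeoGroup (X : Type*) [TopologicalSpace X] : Group (X ≃ₜ X) where
  mul f g := g.trans f
  one := Homeomorph.refl X
  inv := Homeomorph.symm
  mul_assoc f g h := rfl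
  one_mul f := rfl
  mul_one f := rfl
  inv_mul_cancel f := by ext x; exact f.symm_apply_apply x

/-- The compact-open topology on the homeomorphism group `H(X)`, induced from the
compact-open topology on `C(X, X)`. -/
def coTop (X : Type*) [TopologicalSpace X] : TopologicalSpace (X ≃ₜ X) :=
  TopologicalSpace.induced (fun f : X ≃ₜ X => (f : C(X, X))) ContinuousMap.compactOpen

/-- The group `Aut(G)` of all topological group automorphisms of a topological group `G`
(group automorphisms that are homeomorphisms), as a subgroup of the homeomorphism
group of `G`. -/
def topAut (G : Type*) [Group G] [TopologicalSpace G] : Subgroup (G ≃ₜ G) where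
  carrier := {f : G ≃ₜ G | ∀ a b : G, f (a * b) = f a * f b}
  one_mem' := fun _ _ => rfl
  mul_mem' := by
    intro f g hf hg a b
    show f (g (a * b)) = f (g a) * f (g b)
    rw [hg, hf]
  inv_mem' := by
    intro f hf a b
    show f.symm (a * b) = f.symm a * f.symm b
    apply f.injective
    rw [hf]
    simp

/-- The compact-open topology on `Aut(G)`. -/
def autTop (G : Type*) [Group G] [TopologicalSpace G] : TopologicalSpace ↥(topAut G) :=
  TopologicalSpace.induced (Subtype.val : ↥(topAut G) → G ≃ₜ G) (coTop G)

/-- The tautological action of a subgroup `P ≤ Aut(G)` on `G`, as a homomorphism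
`P →* MulAut G`. -/
def actHom {G : Type*} [Group G] [TopologicalSpace G] (P : Subgroup ↥(topAut G)) :
    ↥P →* MulAut G where
  toFun p := MulEquiv.mk' p.1.1.toEquiv (fun a b => p.1.2 a b)
  map_one' := rfl
  map_mul' _ _ := rfl

/-- The topology on a subgroup `P ≤ Aut(G)`, inherited from the compact-open topology. -/
def subAutTop {G : Type*} [Group G] [TopologicalSpace G] (P : Subgroup ↥(topAut G)) :
    TopologicalSpace ↥P :=
  TopologicalSpace.induced (Subtype.val : ↥P → ↥(topAut G)) (autTop G)

/-- The product topology on the topological semidirect product `G ⋊ P`, whose underlying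
group is `SemidirectProduct G ↥P (actHom P)`, i.e. the multiplication is
`(g₁, p₁) * (g₂, p₂) = (g₁ * p₁ g₂, p₁ * p₂)`. -/
def sdpTop {G : Type*} [Group G] [TopologicalSpace G] (P : Subgroup ↥(topAut G)) :
    TopologicalSpace (G ⋊[actHom P] ↥P) :=
  TopologicalSpace.induced (fun x : G ⋊[actHom P] ↥P => (x.left, x.right))
    (@instTopologicalSpaceProd G ↥P _ (subAutTop P))

/-- A (Hausdorff) topological group `(G, τ)` is *minimal* if every Hausdorff group topology
on `G` coarser than `τ` equals `τ`. -/
def IsMinimalTopGroup (G : Type*) [Group G] (τ : TopologicalSpace G) : Prop :=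
  ∀ σ : TopologicalSpace G, τ ≤ σ → @IsTopologicalGroup G σ _ → @T2Space G σ → σ = τ

/-- The canonical homomorphism `Γ : G → Aut(G)` sending `g` to the inner automorphism
`γ_g : x ↦ g * x * g⁻¹`; its range is the subgroup `Inn(G)` of inner automorphisms. -/
def innerAutHom (G : Type*) [Group G] [TopologicalSpace G] [IsTopologicalGroup G] :
    G →* ↥(topAut G) where
  toFun g := ⟨(Homeomorph.mulLeft g).trans (Homeomorph.mulRight g⁻¹), by
    intro a b
    show g * (a * b) * g⁻¹ = (g * a * g⁻¹) * (g * b * g⁻¹)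
    group⟩
  map_one' := by
    apply Subtype.ext
    ext x
    show (1 : G) * x * (1 : G)⁻¹ = x
    group
  map_mul' g h := by
    apply Subtype.ext
    ext x
    show (g * h) * x * (g * h)⁻¹ = g * (h * x * h⁻¹) * g⁻¹
    group

/-- A subgroup `P` of a topological group is *essential* in a subset `Q ⊇ P` (here `Q` is
always a subgroup of the ambient group `A`, given as a set, typically the closure of `P`)
if every nontrivial subgroup `N` of `A` contained in `Q` which is normal in `Q` and closed
in the subspace topology of `Q` meets `P` nontrivially. -/
def EssentialIn {A : Type*} [Group A] (t : TopologicalSpace A)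
    (P : Subgroup A) (Q : Set A) : Prop :=
  ∀ N : Subgroup A, (N : Set A) ⊆ Q →
    (∀ q ∈ Q, ∀ n ∈ N, q * n * q⁻¹ ∈ N) →
    ((@closure A t (N : Set A)) ∩ Q ⊆ (N : Set A)) →
    N ≠ ⊥ → ∃ x ∈ N, x ∈ P ∧ x ≠ 1

/-- Let `G` be a compact Hausdorff topological group and `P ≤ Aut(G)`.
If `P ∩ Inn(G)` is essential in `cl(P) ∩ Inn(G)`, then the topological semidirect product
`G ⋊ P` is a minimal topological group. -/
theorem semidirectProduct_minimal_of_essential_inn (G : Type*)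
    [Group G] [TopologicalSpace G] [IsTopologicalGroup G] [CompactSpace G] [T2Space G]
    (P : Subgroup ↥(topAut G))
    (hess : EssentialIn (autTop G) (P ⊓ (innerAutHom G).range)
      ((@closure _ (autTop G) (P : Set ↥(topAut G))) ∩ ((innerAutHom G).range : Set ↥(topAut G)))) :
    IsMinimalTopGroup (G ⋊[actHom P] ↥P) (sdpTop P) := by
  intro σ hle hσg hσ2
  letI tH : TopologicalSpace (G ≃ₜ G) := coTop G
  letI tA : TopologicalSpace ↥(topAut G) := autTop G
  letI tP : TopologicalSpace ↥P := subAutTop P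
  letI tM : TopologicalSpace (G ⋊[actHom P] ↥P) := σ
  haveI : IsTopologicalGroup (G ⋊[actHom P] ↥P) := hσg
  haveI : T2Space (G ⋊[actHom P] ↥P) := hσ2
  -- the coercion `Aut(G) → C(G,G)` is continuous and injective
  have hvalc0 : Continuous (Subtype.val : ↥(topAut G) → G ≃ₜ G) := continuous_induced_dom
  have htoC : Continuous (fun f : G ≃ₜ G => (f : C(G, G))) := continuous_induced_dom
  have hvalc : Continuous (fun q : ↥(topAut G) => ((q : G ≃ₜ G) : C(G, G))) := htoC.comp hvalc0
  have happ : ∀ (q r : ↥(topAut G)) (x : G), ((q * r : ↥(topAut G)) : G ≃ₜ G) x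
      = (q : G ≃ₜ G) ((r : G ≃ₜ G) x) := fun _ _ _ => rfl
  have hΓapp : ∀ c x : G, ((innerAutHom G c : ↥(topAut G)) : G ≃ₜ G) x = c * x * c⁻¹ :=
    fun _ _ => rfl
  have hmulA : Continuous (fun q : ↥(topAut G) × ↥(topAut G) => q.1 * q.2) := by
    apply continuous_induced_rng.2
    apply continuous_induced_rng.2
    have heq : (fun q : ↥(topAut G) × ↥(topAut G) =>
          (((q.1 * q.2 : ↥(topAut G)) : G ≃ₜ G) : C(G, G)))
        = fun q => (((q.1 : G ≃ₜ G) : C(G, G)).comp ((q.2 : G ≃ₜ G) : C(G, G))) := by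
      funext q; ext x; rfl
    show Continuous (fun q : ↥(topAut G) × ↥(topAut G) =>
          (((q.1 * q.2 : ↥(topAut G)) : G ≃ₜ G) : C(G, G)))
    rw [heq]
    exact ContinuousMap.continuous_comp'.comp
      ((hvalc.comp continuous_snd).prodMk (hvalc.comp continuous_fst))
  haveI : ContinuousMul ↥(topAut G) := ⟨hmulA⟩
  haveI : T2Space ↥(topAut G) := by
    refine T2Space.of_injective_continuous
      (f := fun q : ↥(topAut G) => ((q : G ≃ₜ G) : C(G, G))) ?_ hvalc
    intro q r h
    exact Subtype.ext (Homeomorph.ext fun x => DFunLike.congr_fun h x)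
  have hevalc : ∀ x : G, Continuous (fun q : ↥(topAut G) => (q : G ≃ₜ G) x) := by
    intro x
    have h1 : Continuous (fun f : C(G, G) => f x) := continuous_eval_const x
    exact h1.comp hvalc
  have hΓc : Continuous (fun g : G => innerAutHom G g) := by
    apply continuous_induced_rng.2
    apply continuous_induced_rng.2
    show Continuous (fun g : G => (((innerAutHom G g : ↥(topAut G)) : G ≃ₜ G) : C(G, G)))
    have heq : (fun g : G => (((innerAutHom G g : ↥(topAut G)) : G ≃ₜ G) : C(G, G)))
        = ⇑(ContinuousMap.curry ⟨fun q : G × G => q.1 * q.2 * q.1⁻¹, by fun_prop⟩) := by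
      funext g; ext x
      rw [ContinuousMap.curry_apply]
      exact hΓapp g x
    rw [heq]; exact (ContinuousMap.curry _).continuous
  have conjInner : ∀ (r : ↥(topAut G)) (c : G),
      r * innerAutHom G c * r⁻¹ = innerAutHom G ((r : G ≃ₜ G) c) := by
    intro r c
    have hr : ∀ a b, (r : G ≃ₜ G) (a * b) = (r : G ≃ₜ G) a * (r : G ≃ₜ G) b := r.2
    have hri : ∀ c : G, (r : G ≃ₜ G) c⁻¹ = ((r : G ≃ₜ G) c)⁻¹ := fun c =>
      map_inv (MulEquiv.mk' (r : G ≃ₜ G).toEquiv hr) c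
    apply Subtype.ext; apply Homeomorph.ext; intro x
    have h1 : ((r * innerAutHom G c * r⁻¹ : ↥(topAut G)) : G ≃ₜ G) x
        = (r : G ≃ₜ G) (c * (r : G ≃ₜ G).symm x * c⁻¹) := rfl
    rw [h1, hr, hr, hri, (r : G ≃ₜ G).apply_symm_apply, hΓapp]
  -- the embedding `G → M` is σ-closed
  have hjτ : @Continuous _ _ _ (sdpTop P)
      (fun g : G => (SemidirectProduct.inl g : G ⋊[actHom P] ↥P)) := by
    apply continuous_induced_rng.2
    exact continuous_id.prodMk continuous_const
  have hjσ : Continuous (fun g : G => (SemidirectProduct.inl g : G ⋊[actHom P] ↥P)) :=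
    continuous_le_rng hle hjτ
  have hjCE : Topology.IsClosedEmbedding (fun g : G => (SemidirectProduct.inl g : G ⋊[actHom P] ↥P)) :=
    hjσ.isClosedEmbedding (fun a b hab => SemidirectProduct.inl_injective hab)
  have hinrτ : @Continuous _ _ tP (sdpTop P)
      (fun p : ↥P => (SemidirectProduct.inr p : G ⋊[actHom P] ↥P)) := by
    apply continuous_induced_rng.2
    exact continuous_const.prodMk continuous_id
  have hinrσ : Continuous (fun p : ↥P => (SemidirectProduct.inr p : G ⋊[actHom P] ↥P)) :=
    continuous_le_rng hle hinrτ
  -- the conjugation map `A : M → Aut(G)` is σ-continuous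
  set A : (G ⋊[actHom P] ↥P) → ↥(topAut G) :=
    fun m => innerAutHom G m.left * P.subtype m.right with hA_def
  set cG : (G ⋊[actHom P] ↥P) × G → G :=
    fun q => (q.1 * SemidirectProduct.inl q.2 * q.1⁻¹).left with hcG_def
  have hright1 : ∀ z : G ⋊[actHom P] ↥P, z.right = 1 → SemidirectProduct.inl z.left = z := by
    intro z hz
    ext
    · exact SemidirectProduct.left_inl _
    · rw [SemidirectProduct.right_inl, hz]
  have hcGeq : ∀ q : (G ⋊[actHom P] ↥P) × G,
      SemidirectProduct.inl (cG q) = q.1 * SemidirectProduct.inl q.2 * q.1⁻¹ := by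
    intro q
    apply hright1
    simp [SemidirectProduct.mul_right, SemidirectProduct.inv_right, SemidirectProduct.right_inl]
  have hcGc : Continuous cG := by
    rw [hjCE.isEmbedding.isInducing.continuous_iff]
    have h2 : ((fun g : G => (SemidirectProduct.inl g : G ⋊[actHom P] ↥P)) ∘ cG)
        = fun q => q.1 * SemidirectProduct.inl q.2 * q.1⁻¹ := funext hcGeq
    rw [h2]
    exact (continuous_fst.mul (hjσ.comp continuous_snd)).mul continuous_fst.inv
  have hAc : Continuous A := by
    apply continuous_induced_rng.2
    apply continuous_induced_rng.2
    show Continuous (fun m : G ⋊[actHom P] ↥P => (((A m : ↥(topAut G)) : G ≃ₜ G) : C(G, G)))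
    have heq : (fun m : G ⋊[actHom P] ↥P => (((A m : ↥(topAut G)) : G ≃ₜ G) : C(G, G)))
        = ⇑(ContinuousMap.curry ⟨cG, hcGc⟩) := by
      funext m; ext x
      rw [ContinuousMap.curry_apply]
      show ((A m : ↥(topAut G)) : G ≃ₜ G) x = cG (m, x)
      rw [hA_def, hcG_def]
      rw [happ, hΓapp]
      simp only [SemidirectProduct.mul_left, SemidirectProduct.mul_right,
        SemidirectProduct.inv_left, SemidirectProduct.left_inl, SemidirectProduct.right_inl,
        map_inv, mul_one, MulAut.inv_def, MulEquiv.apply_symm_apply]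
      rfl
    rw [heq]; exact (ContinuousMap.curry _).continuous
  -- the projections
  set φM : (G ⋊[actHom P] ↥P) → ↥(topAut G) :=
    fun m => P.subtype (SemidirectProduct.rightHom m) with hφM_def
  set ψM : (G ⋊[actHom P] ↥P) → G := fun m => m.left with hψM_def
  have hφ_eq : ∀ m, φM m = (innerAutHom G (ψM m))⁻¹ * A m := by
    intro m
    simp only [hφM_def, hψM_def, hA_def, inv_mul_cancel_left]
    rfl
  have hA1 : A 1 = 1 := by
    simp only [hA_def, SemidirectProduct.one_left, SemidirectProduct.one_right,
      map_one, mul_one]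
  have keyRep : ∀ V : Ultrafilter (G ⋊[actHom P] ↥P), ↑V ≤ 𝓝 (1 : G ⋊[actHom P] ↥P) →
      ∀ g : G, Filter.Tendsto ψM ↑V (𝓝 g) →
      Filter.Tendsto φM ↑V (𝓝 ((innerAutHom G g)⁻¹)) := by
    intro V hV g hg
    have hAV : Filter.Tendsto A ↑V (𝓝 (1 : ↥(topAut G))) := by
      have h1 := hAc.tendsto (1 : G ⋊[actHom P] ↥P)
      rw [hA1] at h1
      exact h1.mono_left hV
    have h2 : Filter.Tendsto (fun m => (innerAutHom G (ψM m))⁻¹) ↑V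
        (𝓝 ((innerAutHom G g)⁻¹)) := by
      have h3 : Filter.Tendsto (fun m => innerAutHom G (ψM m)⁻¹) ↑V
          (𝓝 (innerAutHom G g⁻¹)) := (hΓc.tendsto _).comp hg.inv
      simpa only [map_inv] using h3
    have h4 := h2.mul hAV
    rw [mul_one] at h4
    exact h4.congr fun m => (hφ_eq m).symm
  have hcomp : ∀ V : Ultrafilter (G ⋊[actHom P] ↥P), ∃ g : G, Filter.Tendsto ψM ↑V (𝓝 g) := by
    intro V
    obtain ⟨g, -, hg⟩ := isCompact_univ.ultrafilter_le_nhds (V.map ψM)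
      (by simp [Filter.le_principal_iff])
    rw [Ultrafilter.coe_map] at hg
    exact ⟨g, hg⟩
  -- the subgroup of limits of `φM` along σ-null ultrafilters
  set Nset : Set ↥(topAut G) := {x | ∃ V : Ultrafilter (G ⋊[actHom P] ↥P),
    ↑V ≤ 𝓝 (1 : G ⋊[actHom P] ↥P) ∧ Filter.Tendsto φM ↑V (𝓝 x)} with hNset_def
  have hNcluster : Nset = {x | ClusterPt x (Filter.map φM (𝓝 (1 : G ⋊[actHom P] ↥P)))} := by
    ext x
    constructor
    · rintro ⟨V, hV1, hVx⟩
      have h1 : Filter.map φM ↑V ≤ 𝓝 x ⊓ Filter.map φM (𝓝 1) :=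
        le_inf hVx (Filter.map_mono hV1)
      exact Filter.neBot_of_le h1
    · intro hx
      rcases clusterPt_iff_ultrafilter.mp hx with ⟨U, hUF, hUx⟩
      have hne : Filter.NeBot (Filter.comap φM ↑U ⊓ 𝓝 (1 : G ⋊[actHom P] ↥P)) := by
        rw [← Filter.map_neBot_iff φM, Filter.push_pull', inf_eq_left.mpr hUF]
        exact U.neBot
      haveI := hne
      refine ⟨Ultrafilter.of (Filter.comap φM ↑U ⊓ 𝓝 (1 : G ⋊[actHom P] ↥P)),
        (Ultrafilter.of_le _).trans inf_le_right, ?_⟩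
      calc Filter.map φM ↑(Ultrafilter.of (Filter.comap φM ↑U ⊓ 𝓝 (1 : G ⋊[actHom P] ↥P)))
          ≤ Filter.map φM (Filter.comap φM ↑U) :=
            Filter.map_mono ((Ultrafilter.of_le _).trans inf_le_left)
        _ ≤ ↑U := Filter.map_comap_le
        _ ≤ 𝓝 x := hUx
  have hNclosed : IsClosed Nset := by
    rw [hNcluster]; exact isClosed_setOf_clusterPt
  have h_one : (1 : ↥(topAut G)) ∈ Nset := by
    refine ⟨(pure 1 : Ultrafilter _), by simpa using pure_le_nhds _, ?_⟩
    have h1 : φM (1 : G ⋊[actHom P] ↥P) = 1 := by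
      simp only [hφM_def, map_one]
    have h2 := tendsto_pure_nhds φM (1 : G ⋊[actHom P] ↥P)
    rw [h1] at h2
    simpa using h2
  have h_mul : ∀ x ∈ Nset, ∀ y ∈ Nset, x * y ∈ Nset := by
    rintro x ⟨V, hV1, hVx⟩ y ⟨W, hW1, hWy⟩
    haveI : Filter.NeBot (((V : Filter (G ⋊[actHom P] ↥P)) ×ˢ (W : Filter (G ⋊[actHom P] ↥P)))) := Filter.prod_neBot.2 ⟨V.neBot, W.neBot⟩
    set Z := Ultrafilter.of (((V : Filter (G ⋊[actHom P] ↥P)) ×ˢ (W : Filter (G ⋊[actHom P] ↥P)))) with hZ_def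
    have hZle : ↑Z ≤ ((V : Filter (G ⋊[actHom P] ↥P)) ×ˢ (W : Filter (G ⋊[actHom P] ↥P))) := Ultrafilter.of_le _
    refine ⟨Z.map (fun q => q.1 * q.2), ?_, ?_⟩
    · rw [Ultrafilter.coe_map]
      have h1 : Filter.Tendsto (fun q : (G ⋊[actHom P] ↥P) × (G ⋊[actHom P] ↥P) => q.1 * q.2)
          (((V : Filter (G ⋊[actHom P] ↥P)) ×ˢ (W : Filter (G ⋊[actHom P] ↥P)))) (𝓝 1) := by
        have h2 : Filter.Tendsto (fun q : (G ⋊[actHom P] ↥P) × (G ⋊[actHom P] ↥P) => q.1 * q.2)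
            (𝓝 1 ×ˢ 𝓝 1) (𝓝 1) := by
          have := continuous_mul.tendsto ((1 : G ⋊[actHom P] ↥P), (1 : G ⋊[actHom P] ↥P))
          rw [nhds_prod_eq] at this
          simpa using this
        exact h2.mono_left (Filter.prod_mono hV1 hW1)
      exact h1.mono_left hZle
    · rw [Ultrafilter.coe_map, Filter.tendsto_map'_iff]
      have hx1 : Filter.Tendsto (fun q : (G ⋊[actHom P] ↥P) × (G ⋊[actHom P] ↥P) => φM q.1)
          ↑Z (𝓝 x) := hVx.comp ((Filter.tendsto_fst).mono_left hZle)
      have hy1 : Filter.Tendsto (fun q : (G ⋊[actHom P] ↥P) × (G ⋊[actHom P] ↥P) => φM q.2)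
          ↑Z (𝓝 y) := hWy.comp ((Filter.tendsto_snd).mono_left hZle)
      have h3 := hx1.mul hy1
      refine h3.congr fun q => ?_
      show φM q.1 * φM q.2 = φM (q.1 * q.2)
      simp only [hφM_def, map_mul]
  have h_inv : ∀ x ∈ Nset, x⁻¹ ∈ Nset := by
    rintro x ⟨V, hV1, hVx⟩
    set V' := V.map (fun m => m⁻¹) with hV'_def
    have hV'1 : ↑V' ≤ 𝓝 (1 : G ⋊[actHom P] ↥P) := by
      rw [hV'_def, Ultrafilter.coe_map]
      have h1 : Filter.Tendsto (fun m : G ⋊[actHom P] ↥P => m⁻¹) (𝓝 1) (𝓝 1) := by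
        simpa using (continuous_inv.tendsto (1 : G ⋊[actHom P] ↥P))
      exact (h1.mono_left hV1)
    obtain ⟨g, hg⟩ := hcomp V'
    have hrep := keyRep V' hV'1 g hg
    -- x * (innerAutHom G g)⁻¹ = 1, hence x⁻¹ = (innerAutHom G g)⁻¹
    have hmul2 : Filter.Tendsto (fun m : G ⋊[actHom P] ↥P => φM m * φM m⁻¹) ↑V
        (𝓝 (x * (innerAutHom G g)⁻¹)) := by
      refine (hVx.mul ?_)
      rw [hV'_def, Ultrafilter.coe_map, Filter.tendsto_map'_iff] at hrep
      exact hrep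
    have hconst : (fun m : G ⋊[actHom P] ↥P => φM m * φM m⁻¹) = fun _ => 1 := by
      funext m
      simp only [hφM_def, ← map_mul, mul_inv_cancel, map_one]
    rw [hconst] at hmul2
    have h1 : x * (innerAutHom G g)⁻¹ = 1 :=
      (tendsto_nhds_unique tendsto_const_nhds hmul2).symm
    have h2 : x = innerAutHom G g := mul_inv_eq_one.mp h1
    rw [h2]
    exact ⟨V', hV'1, hrep⟩
  set NN : Subgroup ↥(topAut G) :=
    { carrier := Nset
      one_mem' := h_one
      mul_mem' := fun {a b} ha hb => h_mul a ha b hb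
      inv_mem' := fun {a} ha => h_inv a ha } with hNN_def
  have hNrep : ∀ x ∈ Nset, ∃ g : G, x = (innerAutHom G g)⁻¹ := by
    rintro x ⟨V, hV1, hVx⟩
    obtain ⟨g, hg⟩ := hcomp V
    exact ⟨g, tendsto_nhds_unique hVx (keyRep V hV1 g hg)⟩
  have hNsubQ : (NN : Set ↥(topAut G)) ⊆
      (closure (P : Set ↥(topAut G))) ∩ ((innerAutHom G).range : Set ↥(topAut G)) := by
    intro x hx
    refine ⟨?_, ?_⟩
    · obtain ⟨V, hV1, hVx⟩ := hx
      refine mem_closure_of_tendsto hVx (Filter.Eventually.of_forall fun m => ?_)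
      show φM m ∈ (P : Set ↥(topAut G))
      simp only [hφM_def, Subgroup.coe_subtype]
      exact (SemidirectProduct.rightHom m).2
    · obtain ⟨g, hg⟩ := hNrep x hx
      show x ∈ (innerAutHom G).range
      exact MonoidHom.mem_range.mpr ⟨g⁻¹, by rw [map_inv, ← hg]⟩
  have hNnorm : ∀ q ∈ (closure (P : Set ↥(topAut G))) ∩
      ((innerAutHom G).range : Set ↥(topAut G)), ∀ n ∈ NN, q * n * q⁻¹ ∈ NN := by
    intro q hq n hn
    obtain ⟨g, hgrep⟩ := hNrep n hn
    have hstep : ∀ r : ↥P, innerAutHom G (((r : ↥(topAut G)) : G ≃ₜ G) g⁻¹) ∈ Nset := by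
      intro r
      obtain ⟨V, hV1, hVn⟩ := hn
      set cj : (G ⋊[actHom P] ↥P) → (G ⋊[actHom P] ↥P) :=
        fun m => SemidirectProduct.inr r * m * (SemidirectProduct.inr r)⁻¹ with hcj_def
      have hidV : Filter.Tendsto (fun m : G ⋊[actHom P] ↥P => m) ↑V (𝓝 1) := by
        show Filter.map (fun m : G ⋊[actHom P] ↥P => m) ↑V ≤ 𝓝 1
        rw [Filter.map_id']; exact hV1
      have hcjt : Filter.Tendsto cj ↑V (𝓝 1) := by
        have hc : Continuous cj := by
          rw [hcj_def]
          exact (continuous_const.mul continuous_id).mul continuous_const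
        have h1 := hc.tendsto 1
        rw [show cj 1 = 1 by rw [hcj_def]; simp] at h1
        exact h1.mono_left hV1
      have hmem : (r : ↥(topAut G)) * n * (r : ↥(topAut G))⁻¹ ∈ Nset := by
        refine ⟨V.map cj, by rw [Ultrafilter.coe_map]; exact hcjt, ?_⟩
        rw [Ultrafilter.coe_map, Filter.tendsto_map'_iff]
        have h2 : Filter.Tendsto (fun m => (r : ↥(topAut G)) * φM m * (r : ↥(topAut G))⁻¹) ↑V
            (𝓝 ((r : ↥(topAut G)) * n * (r : ↥(topAut G))⁻¹)) :=
          (tendsto_const_nhds.mul hVn).mul tendsto_const_nhds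
        refine h2.congr fun m => ?_
        show (r : ↥(topAut G)) * φM m * (r : ↥(topAut G))⁻¹ = φM (cj m)
        simp only [hφM_def, hcj_def, map_mul, map_inv, SemidirectProduct.rightHom_inr,
          Subgroup.coe_subtype, Subgroup.coe_mul, Subgroup.coe_inv]
      rw [hgrep, ← map_inv, conjInner] at hmem
      exact hmem
    set θ : ↥(topAut G) → ↥(topAut G) := fun r => innerAutHom G ((r : G ≃ₜ G) g⁻¹) with hθ_def
    have hθc : Continuous θ := hΓc.comp (hevalc g⁻¹)
    have hq1 : θ q ∈ Nset := by
      have h3 : θ q ∈ closure (θ '' (P : Set ↥(topAut G))) :=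
        image_closure_subset_closure_image hθc ⟨q, hq.1, rfl⟩
      have h4 : θ '' (P : Set ↥(topAut G)) ⊆ Nset := by
        rintro - ⟨r, hr, rfl⟩
        exact hstep ⟨r, hr⟩
      exact (hNclosed.closure_eq ▸ closure_mono h4) h3
    show q * n * q⁻¹ ∈ Nset
    rw [hgrep, ← map_inv, conjInner]
    exact hq1
  have hNbot : NN = ⊥ := by
    by_contra hne
    obtain ⟨x, hxN, hxPI, hx1⟩ := hess NN hNsubQ hNnorm
      (by
        have hcoe : (NN : Set ↥(topAut G)) = Nset := rfl
        rw [hcoe, hNclosed.closure_eq]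
        exact Set.inter_subset_left) hne
    obtain ⟨hxP, hxR⟩ := Subgroup.mem_inf.mp hxPI
    obtain ⟨V, hV1, hVx⟩ := hxN
    have hrt : Filter.Tendsto (SemidirectProduct.rightHom : G ⋊[actHom P] ↥P → ↥P) ↑V
        (𝓝 (⟨x, hxP⟩ : ↥P)) := by
      have h2 : (𝓝 (⟨x, hxP⟩ : ↥P)) = Filter.comap (Subtype.val : ↥P → ↥(topAut G)) (𝓝 x) :=
        nhds_induced _ _
      rw [h2, Filter.tendsto_comap_iff]
      exact hVx
    have hidV : Filter.Tendsto (fun m : G ⋊[actHom P] ↥P => m) ↑V (𝓝 1) := by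
      show Filter.map (fun m : G ⋊[actHom P] ↥P => m) ↑V ≤ 𝓝 1
      rw [Filter.map_id']; exact hV1
    have hinrt : Filter.Tendsto (fun m : G ⋊[actHom P] ↥P =>
        (SemidirectProduct.inr (SemidirectProduct.rightHom m) : G ⋊[actHom P] ↥P)) ↑V
        (𝓝 (SemidirectProduct.inr (⟨x, hxP⟩ : ↥P))) := (hinrσ.tendsto _).comp hrt
    have hfull := hidV.mul hinrt.inv
    have hmemrange : (1 : G ⋊[actHom P] ↥P) * (SemidirectProduct.inr (⟨x, hxP⟩ : ↥P))⁻¹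
        ∈ Set.range (fun g : G => (SemidirectProduct.inl g : G ⋊[actHom P] ↥P)) := by
      refine hjCE.isClosed_range.mem_of_tendsto hfull
        (Filter.Eventually.of_forall fun m => ?_)
      refine ⟨(m * (SemidirectProduct.inr (SemidirectProduct.rightHom m))⁻¹).left, ?_⟩
      apply hright1
      simp [SemidirectProduct.mul_right, SemidirectProduct.inv_right,
        SemidirectProduct.right_inr, SemidirectProduct.rightHom]
    obtain ⟨g0, hg0⟩ := hmemrange
    have h3 : (1 : ↥P) = (⟨x, hxP⟩ : ↥P)⁻¹ := by
      have h5 := congrArg SemidirectProduct.rightHom hg0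
      simpa [map_mul, map_inv, map_one, SemidirectProduct.rightHom_inl,
        SemidirectProduct.rightHom_inr] using h5
    have h4 : (⟨x, hxP⟩ : ↥P) = 1 := by
      rw [← inv_inv (⟨x, hxP⟩ : ↥P), ← h3, inv_one]
    apply hx1
    have h6 := congrArg (Subtype.val : ↥P → ↥(topAut G)) h4
    simpa using h6
  have htendφ1 : Filter.Tendsto φM (𝓝 (1 : G ⋊[actHom P] ↥P)) (𝓝 (1 : ↥(topAut G))) := by
    show Filter.map φM (𝓝 (1 : G ⋊[actHom P] ↥P)) ≤ 𝓝 (1 : ↥(topAut G))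
    rw [Filter.le_iff_ultrafilter]
    intro U hU
    have hne2 : Filter.NeBot (Filter.comap φM ↑U ⊓ 𝓝 (1 : G ⋊[actHom P] ↥P)) := by
      rw [← Filter.map_neBot_iff φM, Filter.push_pull', inf_eq_left.mpr hU]
      exact U.neBot
    haveI := hne2
    set V := Ultrafilter.of (Filter.comap φM ↑U ⊓ 𝓝 (1 : G ⋊[actHom P] ↥P)) with hV_def
    have hV1 : ↑V ≤ 𝓝 (1 : G ⋊[actHom P] ↥P) := (Ultrafilter.of_le _).trans inf_le_right
    obtain ⟨g, hg⟩ := hcomp V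
    have hrep := keyRep V hV1 g hg
    have hmem : (innerAutHom G g)⁻¹ ∈ Nset := ⟨V, hV1, hrep⟩
    have h1 : (innerAutHom G g)⁻¹ = 1 := by
      have h2 : (innerAutHom G g)⁻¹ ∈ NN := hmem
      rw [hNbot] at h2
      simpa [Subgroup.mem_bot] using h2
    have hUV : Filter.map φM ↑V = ↑U := by
      refine Ultrafilter.unique U ?_
      calc Filter.map φM ↑V ≤ Filter.map φM (Filter.comap φM ↑U) :=
            Filter.map_mono ((Ultrafilter.of_le _).trans inf_le_left)
        _ ≤ ↑U := Filter.map_comap_le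
    rw [← hUV]
    rw [h1] at hrep
    exact hrep
  haveI : ContinuousMul ↥P := ⟨by
    apply continuous_induced_rng.2
    show Continuous fun q : ↥P × ↥P => ((q.1 : ↥(topAut G)) * (q.2 : ↥(topAut G)))
    have hs : Continuous (Subtype.val : ↥P → ↥(topAut G)) := continuous_induced_dom
    exact hmulA.comp ((hs.comp continuous_fst).prodMk (hs.comp continuous_snd))⟩
  have hrightc : Continuous (SemidirectProduct.rightHom : G ⋊[actHom P] ↥P → ↥P) := by
    rw [continuous_iff_continuousAt]
    intro m₀
    have h1 : Filter.Tendsto (SemidirectProduct.rightHom : G ⋊[actHom P] ↥P → ↥P)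
        (𝓝 1) (𝓝 1) := by
      have h2 : (𝓝 (1 : ↥P)) = Filter.comap (Subtype.val : ↥P → ↥(topAut G)) (𝓝 1) := by
        exact nhds_induced _ _
      rw [h2, Filter.tendsto_comap_iff]
      exact htendφ1
    unfold ContinuousAt
    rw [← map_mul_left_nhds_one m₀, Filter.tendsto_map'_iff]
    have heq : ((SemidirectProduct.rightHom : G ⋊[actHom P] ↥P → ↥P) ∘ fun m => m₀ * m)
        = fun m => SemidirectProduct.rightHom m₀ * SemidirectProduct.rightHom m := by
      funext m; exact map_mul _ _ _
    rw [heq]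
    have h5 : Filter.Tendsto
        (fun m => SemidirectProduct.rightHom m₀ * SemidirectProduct.rightHom m)
        (𝓝 (1 : G ⋊[actHom P] ↥P)) (𝓝 (SemidirectProduct.rightHom m₀ * 1)) :=
      tendsto_const_nhds.mul h1
    rw [mul_one] at h5
    exact h5
  have hkc : Continuous (fun m : G ⋊[actHom P] ↥P =>
      m * (SemidirectProduct.inr (SemidirectProduct.rightHom m))⁻¹) :=
    continuous_id.mul ((hinrσ.comp hrightc).inv)
  have hkeq : ((fun g : G => (SemidirectProduct.inl g : G ⋊[actHom P] ↥P)) ∘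
      (fun m : G ⋊[actHom P] ↥P => m.left))
      = fun m => m * (SemidirectProduct.inr (SemidirectProduct.rightHom m))⁻¹ := by
    funext m
    show SemidirectProduct.inl m.left
      = m * (SemidirectProduct.inr (SemidirectProduct.rightHom m))⁻¹
    symm
    ext
    · simp [SemidirectProduct.mul_left, SemidirectProduct.inv_left, SemidirectProduct.left_inr,
        SemidirectProduct.right_inr, SemidirectProduct.left_inl, SemidirectProduct.rightHom]
    · simp [SemidirectProduct.mul_right, SemidirectProduct.inv_right,
        SemidirectProduct.right_inr, SemidirectProduct.right_inl, SemidirectProduct.rightHom]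
  have hleftc : Continuous (fun m : G ⋊[actHom P] ↥P => m.left) := by
    rw [hjCE.isEmbedding.isInducing.continuous_iff, hkeq]
    exact hkc
  refine le_antisymm ?_ hle
  have he : Continuous (fun m : G ⋊[actHom P] ↥P => (m.left, m.right)) :=
    hleftc.prodMk hrightc
  exact continuous_iff_le_induced.mp he
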